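/- arXiv:1910.08421 — 8 statements merged into one kernel-verified Lean document; each statement's English description precedes it below -/
import Mathlib

section
/- Let (Δ, G, ω, ζ) be a generalised voltage graph and let x₀ be a dart of Δ with x₀ ≠ x₀⁻¹. Define ζ̄ by ζ̄(x) = ζ(x) for x ≠ x₀⁻¹ and ζ̄(x₀⁻¹) = ζ(x₀)⁻¹. Then (Δ, G, ω, ζ̄) is a generalised voltage graph and GenCov(Δ, G, ω, ζ) = GenCov(Δ, G, ω, ζ̄). -/
/-- A graph in the sense of Malnič–Nedela–Škoviera: vertices, darts,
an initial-vertex function and an involutory dart-reversal. -/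
structure PreGraph (V D : Type*) where
  beg : D → V
  inv : D → D
  inv_inv : ∀ x, inv (inv x) = x

/-- The terminal vertex of a dart. -/
def PreGraph.term {V D : Type*} (Δ : PreGraph V D) (x : D) : V := Δ.beg (Δ.inv x)

/-- A generalised voltage graph on a graph `Δ`: a weight function
(given on vertices by `ωv` and on darts by `ωd`) and a voltage assignment `ζ`
satisfying the three defining conditions. -/
structure GenVoltage (V D : Type*) (G : Type*) [Group G] (Δ : PreGraph V D) where
  ωv : V → Subgroup G
  ωd : D → Subgroup G
  ζ : D → G
  wle : ∀ x, ωd x ≤ ωv (Δ.beg x)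
  wconj : ∀ x g, g ∈ ωd x ↔ ζ x * g * (ζ x)⁻¹ ∈ ωd (Δ.inv x)
  wcyc : ∀ x, ζ (Δ.inv x) * ζ x ∈ ωd x

namespace GenVoltage

variable {V D G : Type*} [Group G] {Δ : PreGraph V D} (Θ : GenVoltage V D G Δ)

/-- Vertices of the generalised cover: pairs `(v, ω(v)g)` of a vertex of `Δ`
and a right coset of its weight group. -/
abbrev CovV := Σ v : V, Quotient (QuotientGroup.rightRel (Θ.ωv v))

/-- Darts of the generalised cover: pairs `(x, ω(x)g)`. -/
abbrev CovD := Σ x : D, Quotient (QuotientGroup.rightRel (Θ.ωd x))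

/-- The cover vertex `(v, ω(v)g)`. -/
def vmk (v : V) (g : G) : Θ.CovV := ⟨v, Quotient.mk _ g⟩

/-- The cover dart `(x, ω(x)g)`. -/
def dmk (x : D) (g : G) : Θ.CovD := ⟨x, Quotient.mk _ g⟩

/-- `beg` of the cover: `(x, ω(x)g) ↦ (beg x, ω(beg x)g)`. -/
def covBeg : Θ.CovD → Θ.CovV :=
  fun p => ⟨Δ.beg p.1, Quotient.map id (fun g h hgh => by
    have h1 : h * g⁻¹ ∈ Θ.ωd p.1 := QuotientGroup.rightRel_apply.mp hgh
    exact QuotientGroup.rightRel_apply.mpr (Θ.wle p.1 h1)) p.2⟩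

/-- `inv` of the cover: `(x, ω(x)g) ↦ (x⁻¹, ω(x⁻¹)ζ(x)g)`. -/
def covInv : Θ.CovD → Θ.CovD :=
  fun p => ⟨Δ.inv p.1, Quotient.map (fun g => Θ.ζ p.1 * g) (fun g h hgh => by
    have h1 : h * g⁻¹ ∈ Θ.ωd p.1 := QuotientGroup.rightRel_apply.mp hgh
    have h2 := (Θ.wconj p.1 (h * g⁻¹)).1 h1
    exact QuotientGroup.rightRel_apply.mpr (by simpa [mul_assoc, mul_inv_rev] using h2)) p.2⟩

/-- Terminal vertex of a cover dart. -/
def covTerm : Θ.CovD → Θ.CovV := fun p => Θ.covBeg (Θ.covInv p)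

/-- Right translation by `h` on the cover: `(x, ω(x)g) ↦ (x, ω(x)gh)`, on vertices. -/
def covRightV (h : G) : Θ.CovV → Θ.CovV :=
  fun p => ⟨p.1, Quotient.map (fun g => g * h) (fun a b hab => by
    have h1 := QuotientGroup.rightRel_apply.mp hab
    exact QuotientGroup.rightRel_apply.mpr (by simpa [mul_assoc, mul_inv_rev] using h1)) p.2⟩

/-- Right translation by `h` on the cover, on darts. -/
def covRightD (h : G) : Θ.CovD → Θ.CovD :=
  fun p => ⟨p.1, Quotient.map (fun g => g * h) (fun a b hab => by
    have h1 := QuotientGroup.rightRel_apply.mp hab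
    exact QuotientGroup.rightRel_apply.mpr (by simpa [mul_assoc, mul_inv_rev] using h1)) p.2⟩

end GenVoltage

/-- Walks with respect to abstract initial/terminal vertex functions `B`, `T`:
`WalkBT B T u v l` means `l` is a walk from `u` to `v`. -/
inductive WalkBT {Vt Dt : Type*} (B T : Dt → Vt) : Vt → Vt → List Dt → Prop
  | nil (v : Vt) : WalkBT B T v v []
  | cons (x : Dt) {v : Vt} {l : List Dt} :
      WalkBT B T (T x) v l → WalkBT B T (B x) v (x :: l)


/-- Replacing `ζ(x₀⁻¹)` by `ζ(x₀)⁻¹` again yields a generalised voltage graph with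
the same generalised cover. -/
theorem stmt_2 {V D G : Type*} [Group G] [DecidableEq D] {Δ : PreGraph V D}
    (Θ : GenVoltage V D G Δ) (x₀ : D) (hx₀ : x₀ ≠ Δ.inv x₀) :
    ∃ Θ' : GenVoltage V D G Δ,
      Θ'.ωv = Θ.ωv ∧ Θ'.ωd = Θ.ωd ∧
      Θ'.ζ = (fun x => if x = Δ.inv x₀ then (Θ.ζ x₀)⁻¹ else Θ.ζ x) ∧
      ∀ (x : D) (g : G),
        (Quotient.mk (QuotientGroup.rightRel (Θ.ωd (Δ.inv x))) (Θ.ζ x * g)) =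
          Quotient.mk (QuotientGroup.rightRel (Θ.ωd (Δ.inv x)))
            ((if x = Δ.inv x₀ then (Θ.ζ x₀)⁻¹ else Θ.ζ x) * g) := by
  have hinj : ∀ a b : D, Δ.inv a = Δ.inv b → a = b := fun a b h => by
    have := congrArg Δ.inv h
    simpa [Δ.inv_inv] using this
  refine ⟨{ ωv := Θ.ωv
            ωd := Θ.ωd
            ζ := fun x => if x = Δ.inv x₀ then (Θ.ζ x₀)⁻¹ else Θ.ζ x
            wle := Θ.wle
            wconj := ?_
            wcyc := ?_ }, rfl, rfl, rfl, ?_⟩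
  · intro x g
    by_cases hx : x = Δ.inv x₀
    · subst hx
      beta_reduce
      rw [if_pos rfl, Δ.inv_inv]
      have h := Θ.wconj x₀ ((Θ.ζ x₀)⁻¹ * g * Θ.ζ x₀)
      have e : Θ.ζ x₀ * ((Θ.ζ x₀)⁻¹ * g * Θ.ζ x₀) * (Θ.ζ x₀)⁻¹ = g := by group
      rw [e] at h
      simpa using h.symm
    · beta_reduce
      rw [if_neg hx]
      exact Θ.wconj x g
  · intro x
    by_cases hx : x = Δ.inv x₀
    · beta_reduce
      rw [hx, Δ.inv_inv, if_neg hx₀, if_pos rfl]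
      simpa using (Θ.ωd (Δ.inv x₀)).one_mem
    · by_cases hx' : x = x₀
      · beta_reduce
        rw [hx', if_pos rfl, if_neg hx₀]
        simpa using (Θ.ωd x₀).one_mem
      · have hne2 : Δ.inv x ≠ Δ.inv x₀ := fun h => hx' (hinj _ _ h)
        beta_reduce
        rw [if_neg hx, if_neg hne2]
        exact Θ.wcyc x
  · intro x g
    by_cases hx : x = Δ.inv x₀
    · subst hx
      rw [if_pos rfl]
      refine Quotient.sound (QuotientGroup.rightRel_apply.mpr ?_)
      rw [Δ.inv_inv]
      have h := (Θ.ωd x₀).inv_mem (Θ.wcyc x₀)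
      have e : (Θ.ζ x₀)⁻¹ * g * (Θ.ζ (Δ.inv x₀) * g)⁻¹ = (Θ.ζ (Δ.inv x₀) * Θ.ζ x₀)⁻¹ := by
        group
      rw [e]
      exact h
    · rw [if_neg hx]
end

section
/- For every h ∈ G, the map h̄ sending (x, ω(x)g) to (x, ω(x)gh) for every vertex or dart x of Δ and g ∈ G is an automorphism of the generalised cover GenCov(Δ, G, ω, ζ). -/
/-- Right translation by `h ∈ G` is an automorphism of the generalised cover. -/
theorem stmt_4 {V D G : Type*} [Group G] {Δ : PreGraph V D}
    (Θ : GenVoltage V D G Δ) :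
    ∀ h : G, ∃ (Φv : Θ.CovV → Θ.CovV) (Φd : Θ.CovD → Θ.CovD),
      (∀ (v : V) (g : G), Φv (Θ.vmk v g) = Θ.vmk v (g * h)) ∧
      (∀ (x : D) (g : G), Φd (Θ.dmk x g) = Θ.dmk x (g * h)) ∧
      Function.Bijective Φv ∧ Function.Bijective Φd ∧
      (∀ p, Θ.covBeg (Φd p) = Φv (Θ.covBeg p)) ∧
      (∀ p, Θ.covInv (Φd p) = Φd (Θ.covInv p)) := by

  intro h
  refine ⟨Θ.covRightV h, Θ.covRightD h, fun v g => rfl, fun x g => rfl, ?_, ?_, ?_, ?_⟩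
  · constructor
    · rintro ⟨v, g⟩ ⟨w, g'⟩ heq
      obtain ⟨rfl, hq⟩ := Sigma.mk.inj_iff.mp heq
      refine Sigma.ext rfl ?_
      induction g using Quotient.ind
      induction g' using Quotient.ind
      simp only [GenVoltage.covRightV, Quotient.map_mk, heq_eq_eq, Quotient.eq] at hq ⊢
      have := QuotientGroup.rightRel_apply.mp hq
      exact QuotientGroup.rightRel_apply.mpr (by simpa [mul_assoc] using this)
    · rintro ⟨v, g⟩
      induction g using Quotient.ind with | _ g =>
      exact ⟨⟨v, Quotient.mk _ (g * h⁻¹)⟩, by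
        simp [GenVoltage.covRightV, Quotient.map_mk, mul_assoc]⟩
  · constructor
    · rintro ⟨v, g⟩ ⟨w, g'⟩ heq
      obtain ⟨rfl, hq⟩ := Sigma.mk.inj_iff.mp heq
      refine Sigma.ext rfl ?_
      induction g using Quotient.ind
      induction g' using Quotient.ind
      simp only [GenVoltage.covRightD, Quotient.map_mk, heq_eq_eq, Quotient.eq] at hq ⊢
      have := QuotientGroup.rightRel_apply.mp hq
      exact QuotientGroup.rightRel_apply.mpr (by simpa [mul_assoc] using this)
    · rintro ⟨v, g⟩
      induction g using Quotient.ind with | _ g =>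
      exact ⟨⟨v, Quotient.mk _ (g * h⁻¹)⟩, by
        simp [GenVoltage.covRightD, Quotient.map_mk, mul_assoc]⟩
  · rintro ⟨x, g⟩
    induction g using Quotient.ind with | _ g =>
    rfl
  · rintro ⟨x, g⟩
    induction g using Quotient.ind with | _ g =>
    simp only [GenVoltage.covRightD, GenVoltage.covInv, Quotient.map_mk]
    exact Sigma.ext rfl (heq_of_eq (by exact congrArg (Quotient.mk _) (mul_assoc _ _ _).symm))
end

section
/- Let φ ∈ Aut(Δ) and f ∈ Aut(G) satisfy ω(x^φ) = f(ω(x)) for all vertices/darts x and ζ(x^φ) = f(ζ(x)) for all darts x. Then the permutation Φ defined by (x, ω(x)g)^Φ = (x^φ, ω(x^φ)f(g)) is an automorphism of GenCov(Δ, G, ω, ζ). -/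
/-- A compatible pair `(φ, f)` of a graph automorphism of `Δ` and a group
automorphism of `G` induces an automorphism of the generalised cover. -/
theorem stmt_8 {V D G : Type*} [Group G] {Δ : PreGraph V D}
    (Θ : GenVoltage V D G Δ) (φv : V ≃ V) (φd : D ≃ D) (f : G ≃* G)
    (hbeg : ∀ x : D, φv (Δ.beg x) = Δ.beg (φd x))
    (hinv : ∀ x : D, φd (Δ.inv x) = Δ.inv (φd x))
    (hωv : ∀ v : V, Θ.ωv (φv v) = (Θ.ωv v).map f.toMonoidHom)
    (hωd : ∀ x : D, Θ.ωd (φd x) = (Θ.ωd x).map f.toMonoidHom)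
    (hζ : ∀ x : D, Θ.ζ (φd x) = f (Θ.ζ x)) :
    ∃ (Φv : Θ.CovV → Θ.CovV) (Φd : Θ.CovD → Θ.CovD),
      (∀ (v : V) (g : G), Φv (Θ.vmk v g) = Θ.vmk (φv v) (f g)) ∧
      (∀ (x : D) (g : G), Φd (Θ.dmk x g) = Θ.dmk (φd x) (f g)) ∧
      Function.Bijective Φv ∧ Function.Bijective Φd ∧
      (∀ p, Θ.covBeg (Φd p) = Φv (Θ.covBeg p)) ∧
      (∀ p, Θ.covInv (Φd p) = Φd (Θ.covInv p)) := by

  classical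
  -- fiber equivalences
  have relV : ∀ (v : V) (a b : G),
      (QuotientGroup.rightRel (Θ.ωv v)).r a b ↔
      (QuotientGroup.rightRel (Θ.ωv (φv v))).r (f a) (f b) := by
    intro v a b
    rw [QuotientGroup.rightRel_apply, QuotientGroup.rightRel_apply, hωv v]
    constructor
    · intro h
      exact ⟨b * a⁻¹, h, by simp [map_mul]⟩
    · rintro ⟨c, hc, hce⟩
      have : c = b * a⁻¹ := f.injective (by simpa [map_mul] using hce)
      rwa [← this]
  have relD : ∀ (x : D) (a b : G),
      (QuotientGroup.rightRel (Θ.ωd x)).r a b ↔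
      (QuotientGroup.rightRel (Θ.ωd (φd x))).r (f a) (f b) := by
    intro x a b
    rw [QuotientGroup.rightRel_apply, QuotientGroup.rightRel_apply, hωd x]
    constructor
    · intro h
      exact ⟨b * a⁻¹, h, by simp [map_mul]⟩
    · rintro ⟨c, hc, hce⟩
      have : c = b * a⁻¹ := f.injective (by simpa [map_mul] using hce)
      rwa [← this]
  let Fv : ∀ v : V, Quotient (QuotientGroup.rightRel (Θ.ωv v)) ≃
      Quotient (QuotientGroup.rightRel (Θ.ωv (φv v))) :=
    fun v => Quotient.congr f.toEquiv (relV v)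
  let Fd : ∀ x : D, Quotient (QuotientGroup.rightRel (Θ.ωd x)) ≃
      Quotient (QuotientGroup.rightRel (Θ.ωd (φd x))) :=
    fun x => Quotient.congr f.toEquiv (relD x)
  let Ev : Θ.CovV ≃ Θ.CovV := Equiv.sigmaCongr φv Fv
  let Ed : Θ.CovD ≃ Θ.CovD := Equiv.sigmaCongr φd Fd
  have hEv : ∀ (v : V) (g : G), Ev (Θ.vmk v g) = Θ.vmk (φv v) (f g) := fun v g => rfl
  have hEd : ∀ (x : D) (g : G), Ed (Θ.dmk x g) = Θ.dmk (φd x) (f g) := fun x g => rfl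
  refine ⟨Ev, Ed, hEv, hEd, Ev.bijective, Ed.bijective, ?_, ?_⟩
  · rintro ⟨x, q⟩
    induction q using Quotient.ind with
    | _ g =>
      have h1 : Ed (Θ.dmk x g) = Θ.dmk (φd x) (f g) := hEd x g
      show Θ.covBeg (Ed (Θ.dmk x g)) = Ev (Θ.covBeg (Θ.dmk x g))
      rw [h1]
      show Θ.vmk (Δ.beg (φd x)) (f g) = Ev (Θ.vmk (Δ.beg x) g)
      rw [hEv, hbeg]
  · rintro ⟨x, q⟩
    induction q using Quotient.ind with
    | _ g =>
      have h1 : Ed (Θ.dmk x g) = Θ.dmk (φd x) (f g) := hEd x g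
      show Θ.covInv (Ed (Θ.dmk x g)) = Ed (Θ.covInv (Θ.dmk x g))
      rw [h1]
      show Θ.dmk (Δ.inv (φd x)) (Θ.ζ (φd x) * f g) = Ed (Θ.dmk (Δ.inv x) (Θ.ζ x * g))
      rw [hEd, hinv, hζ, map_mul]
end

section
/- Let (Δ,G,ω,ζ) be a generalised voltage graph and T a spanning tree of Δ. Then there exist a weight function ω' and a voltage assignment ζ' with ζ'(x) = 1 for every dart x of T, such that (Δ,G,ω',ζ') is a generalised voltage graph and GenCov(Δ,G,ω,ζ) ≅ GenCov(Δ,G,ω',ζ'). -/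
/-- `S` is (the dart set of) a spanning tree of `Δ`: closed under dart-reversal,
spanning and connected (any two vertices are joined by a walk inside `S`),
and acyclic (the only reduced closed walks inside `S` are trivial). -/
def IsSpanningTree {V D : Type*} (Δ : PreGraph V D) (S : Set D) : Prop :=
  (∀ x ∈ S, Δ.inv x ∈ S) ∧
  (∀ u v : V, ∃ l : List D, WalkBT Δ.beg Δ.term u v l ∧ ∀ x ∈ l, x ∈ S) ∧
  (∀ (v : V) (l : List D), WalkBT Δ.beg Δ.term v v l →
      List.Chain' (fun a b => b ≠ Δ.inv a) l → (∀ x ∈ l, x ∈ S) → l = [])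

namespace Stmt11Aux

variable {V D G : Type*} [Group G] {Δ : PreGraph V D}

/-- Conjugate subgroup `c H c⁻¹`. -/
def conjSub (c : G) (H : Subgroup G) : Subgroup G where
  carrier := {a | c⁻¹ * a * c ∈ H}
  one_mem' := by simpa using H.one_mem
  mul_mem' := by
    intro a b ha hb
    have h := H.mul_mem ha hb
    simpa [mul_assoc] using h
  inv_mem' := by
    intro a ha
    have h := H.inv_mem ha
    simpa [mul_assoc] using h

lemma mem_conjSub {c a : G} {H : Subgroup G} : a ∈ conjSub c H ↔ c⁻¹ * a * c ∈ H := Iff.rfl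

/-- Voltage of a walk (product of voltages, rightmost = first dart). -/
def vol (ζ : D → G) : List D → G
  | [] => 1
  | x :: t => vol ζ t * ζ x

lemma vol_append (ζ : D → G) (l₁ l₂ : List D) :
    vol ζ (l₁ ++ l₂) = vol ζ l₂ * vol ζ l₁ := by
  induction l₁ with
  | nil => simp [vol]
  | cons x t ih => simp [vol, ih, mul_assoc]

abbrev Walk (Δ : PreGraph V D) (u v : V) (l : List D) := WalkBT Δ.beg Δ.term u v l

abbrev Red (Δ : PreGraph V D) (l : List D) : Prop := List.Chain' (fun a b => b ≠ Δ.inv a) l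

lemma walk_append {u w v : V} {l₁ l₂ : List D} (h₁ : Walk Δ u w l₁) (h₂ : Walk Δ w v l₂) :
    Walk Δ u v (l₁ ++ l₂) := by
  induction h₁ with
  | nil v => simpa using h₂
  | cons x h ih => exact WalkBT.cons x (ih h₂)

lemma walk_nil_eq {u v : V} (h : Walk Δ u v []) : u = v := by cases h; rfl

lemma walk_cons_iff {u v : V} {x : D} {l : List D} (h : Walk Δ u v (x :: l)) :
    u = Δ.beg x ∧ Walk Δ (Δ.term x) v l := by
  cases h with
  | cons _ h => exact ⟨rfl, h⟩

lemma walk_single (x : D) : Walk Δ (Δ.beg x) (Δ.term x) [x] :=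
  WalkBT.cons x (WalkBT.nil _)

lemma walk_single_inv (x : D) : Walk Δ (Δ.term x) (Δ.beg x) [Δ.inv x] := by
  have h0 : Walk Δ (Δ.beg (Δ.inv x)) (Δ.term (Δ.inv x)) [Δ.inv x] := walk_single _
  simpa [PreGraph.term, Δ.inv_inv] using h0

lemma walk_reverse {u v : V} {l : List D} (h : Walk Δ u v l) :
    Walk Δ v u ((l.map Δ.inv).reverse) := by
  induction h with
  | nil v => exact WalkBT.nil v
  | cons x h ih =>
      have h1 := walk_append ih (walk_single_inv x)
      simpa using h1

lemma red_reverse {l : List D} (h : Red Δ l) : Red Δ ((l.map Δ.inv).reverse) := by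
  rw [Red, List.Chain', List.isChain_reverse, List.isChain_map]
  refine List.IsChain.imp ?_ h
  intro a b hab
  simp only [Function.flip_def, Δ.inv_inv, ne_eq]
  exact fun e => hab e.symm

lemma walk_append_split {u v : V} {l₁ l₂ : List D} (h : Walk Δ u v (l₁ ++ l₂)) :
    ∃ w, Walk Δ u w l₁ ∧ Walk Δ w v l₂ := by
  induction l₁ generalizing u with
  | nil => exact ⟨u, WalkBT.nil u, h⟩
  | cons x t ih =>
      obtain ⟨hu, h'⟩ := walk_cons_iff h
      obtain ⟨w, hw1, hw2⟩ := ih h'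
      exact ⟨w, hu ▸ WalkBT.cons x hw1, hw2⟩

lemma reduce_exists {u v : V} {l : List D} (h : Walk Δ u v l) :
    ∃ r, Walk Δ u v r ∧ Red Δ r ∧ ∀ x ∈ r, x ∈ l := by
  induction h with
  | nil v => exact ⟨[], WalkBT.nil v, List.isChain_nil, by simp⟩
  | cons x h ih =>
      obtain ⟨r, hw, hred, hsub⟩ := ih
      rcases r with _ | ⟨y, r'⟩
      · exact ⟨[x], WalkBT.cons x hw, List.isChain_singleton x, by simp⟩
      · by_cases hxy : y = Δ.inv x
        · obtain ⟨hty, hw'⟩ := walk_cons_iff hw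
          refine ⟨r', ?_, hred.tail, fun z hz => List.mem_cons_of_mem _ (hsub z (List.mem_cons_of_mem _ hz))⟩
          have hterm : Δ.term y = Δ.beg x := by rw [hxy, PreGraph.term, Δ.inv_inv]
          exact hterm ▸ hw'
        · refine ⟨x :: y :: r', WalkBT.cons x hw, List.isChain_cons_cons.mpr ⟨hxy, hred⟩, ?_⟩
          intro z hz
          rcases List.mem_cons.mp hz with hz | hz
          · simp [hz]
          · exact List.mem_cons_of_mem _ (hsub z hz)

lemma reduced_unique {S : Set D} (hS : IsSpanningTree Δ S) :
    ∀ (r r' : List D) (u v : V), Walk Δ u v r → Walk Δ u v r' → Red Δ r → Red Δ r' →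
      (∀ x ∈ r, x ∈ S) → (∀ x ∈ r', x ∈ S) → r = r' := by
  intro r
  induction r with
  | nil =>
      intro r' u v h h' _ hr' _ hs'
      have huv := walk_nil_eq h
      subst huv
      exact (hS.2.2 u r' h' hr' hs').symm
  | cons x t ih =>
      intro r' u v h h' hr hr' hs hs'
      obtain ⟨hbx, ht⟩ := walk_cons_iff h
      cases r' with
      | nil =>
          have huv := walk_nil_eq h'
          subst huv
          exact hS.2.2 u (x :: t) h hr hs
      | cons y t' =>
          obtain ⟨hby, ht'⟩ := walk_cons_iff h'
          subst hbx
          have hxy : x = y := by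
            by_contra hne
            have w1 : Walk Δ v (Δ.beg x) (((x :: t).map Δ.inv).reverse) := walk_reverse h
            have wcat : Walk Δ v v ((((x :: t).map Δ.inv).reverse) ++ (y :: t')) :=
              walk_append w1 h'
            have hredcat : Red Δ ((((x :: t).map Δ.inv).reverse) ++ (y :: t')) := by
              rw [Red, List.Chain', List.isChain_append]
              refine ⟨red_reverse hr, hr', ?_⟩
              intro a ha b hb
              rw [List.getLast?_reverse, List.map_cons, List.head?_cons, Option.mem_def,
                Option.some.injEq] at ha
              rw [List.head?_cons, Option.mem_def, Option.some.injEq] at hb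
              subst ha; subst hb
              rw [Δ.inv_inv]
              exact fun e => hne e.symm
            have hscat : ∀ z ∈ (((x :: t).map Δ.inv).reverse) ++ (y :: t'), z ∈ S := by
              intro z hz
              rcases List.mem_append.mp hz with hz | hz
              · rw [List.mem_reverse, List.mem_map] at hz
                obtain ⟨w, hw, rfl⟩ := hz
                exact hS.1 w (hs w hw)
              · exact hs' z hz
            have := hS.2.2 v _ wcat hredcat hscat
            simp at this
          subst hxy
          have htt : t = t' := by
            refine ih t' (Δ.term x) v ht ?_ hr.tail hr'.tail
              (fun z hz => hs z (List.mem_cons_of_mem _ hz))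
              (fun z hz => hs' z (List.mem_cons_of_mem _ hz))
            exact ht'
          rw [htt]

end Stmt11Aux
namespace Stmt11Aux

variable {V D G : Type*} [Group G] {Δ : PreGraph V D}

open Classical in
/-- The normalised voltage graph obtained by conjugating by `c`. -/
noncomputable def normalize (Θ : GenVoltage V D G Δ) (S : Set D)
    (c : V → G)
    (hSinv : ∀ x ∈ S, Δ.inv x ∈ S)
    (hc : ∀ x ∈ S, Θ.ζ x * (c (Δ.beg x))⁻¹ * c (Δ.beg (Δ.inv x)) ∈ Θ.ωd (Δ.inv x)) :
    GenVoltage V D G Δ where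
  ωv v := conjSub (c v) (Θ.ωv v)
  ωd x := conjSub (c (Δ.beg x)) (Θ.ωd x)
  ζ x := if x ∈ S then 1 else c (Δ.beg (Δ.inv x)) * Θ.ζ x * (c (Δ.beg x))⁻¹
  wle := fun x a ha => Θ.wle x ha
  wconj := by
    intro x g
    by_cases hxS : x ∈ S
    · simp only [if_pos hxS]
      have he := hc x hxS
      rw [mem_conjSub, mem_conjSub]
      constructor
      · intro h1
        have h2 := (Θ.wconj x _).1 h1
        have h3 := mul_mem (mul_mem ((Θ.ωd (Δ.inv x)).inv_mem he) h2) he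
        have heq : (c (Δ.beg (Δ.inv x)))⁻¹ * (1 * g * 1⁻¹) * c (Δ.beg (Δ.inv x)) =
            (Θ.ζ x * (c (Δ.beg x))⁻¹ * c (Δ.beg (Δ.inv x)))⁻¹ *
              (Θ.ζ x * ((c (Δ.beg x))⁻¹ * g * c (Δ.beg x)) * (Θ.ζ x)⁻¹) *
              (Θ.ζ x * (c (Δ.beg x))⁻¹ * c (Δ.beg (Δ.inv x))) := by
          group
        rw [heq]
        exact h3
      · intro h1
        have h3 := mul_mem (mul_mem he h1) ((Θ.ωd (Δ.inv x)).inv_mem he)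
        refine (Θ.wconj x _).2 ?_
        have heq : Θ.ζ x * ((c (Δ.beg x))⁻¹ * g * c (Δ.beg x)) * (Θ.ζ x)⁻¹ =
            (Θ.ζ x * (c (Δ.beg x))⁻¹ * c (Δ.beg (Δ.inv x))) *
              ((c (Δ.beg (Δ.inv x)))⁻¹ * (1 * g * 1⁻¹) * c (Δ.beg (Δ.inv x))) *
              (Θ.ζ x * (c (Δ.beg x))⁻¹ * c (Δ.beg (Δ.inv x)))⁻¹ := by
          group
        rw [heq]
        exact h3
    · simp only [if_neg hxS]
      rw [mem_conjSub, mem_conjSub]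
      have heq : (c (Δ.beg (Δ.inv x)))⁻¹ *
          (c (Δ.beg (Δ.inv x)) * Θ.ζ x * (c (Δ.beg x))⁻¹ * g *
            (c (Δ.beg (Δ.inv x)) * Θ.ζ x * (c (Δ.beg x))⁻¹)⁻¹) * c (Δ.beg (Δ.inv x)) =
          Θ.ζ x * ((c (Δ.beg x))⁻¹ * g * c (Δ.beg x)) * (Θ.ζ x)⁻¹ := by
        group
      rw [heq]
      exact Θ.wconj x _
  wcyc := by
    intro x
    by_cases hxS : x ∈ S
    · have hxS' : Δ.inv x ∈ S := hSinv x hxS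
      simp only [if_pos hxS, if_pos hxS']
      simpa using (conjSub (c (Δ.beg x)) (Θ.ωd x)).one_mem
    · have hxS' : Δ.inv x ∉ S := fun h => hxS (Δ.inv_inv x ▸ hSinv _ h)
      simp only [if_neg hxS, if_neg hxS', Δ.inv_inv]
      rw [mem_conjSub]
      have heq : (c (Δ.beg x))⁻¹ *
          (c (Δ.beg x) * Θ.ζ (Δ.inv x) * (c (Δ.beg (Δ.inv x)))⁻¹ *
            (c (Δ.beg (Δ.inv x)) * Θ.ζ x * (c (Δ.beg x))⁻¹)) * c (Δ.beg x) =
          Θ.ζ (Δ.inv x) * Θ.ζ x := by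
        group
      rw [heq]
      exact Θ.wcyc x

end Stmt11Aux
namespace Stmt11Aux

variable {V D G : Type*} [Group G] {Δ : PreGraph V D}

open Classical in
lemma normalize_ζ (Θ : GenVoltage V D G Δ) (S : Set D) (c : V → G) (hSinv) (hc) (x : D) :
    (normalize Θ S c hSinv hc).ζ x =
      if x ∈ S then 1 else c (Δ.beg (Δ.inv x)) * Θ.ζ x * (c (Δ.beg x))⁻¹ := rfl

lemma normalize_ωv (Θ : GenVoltage V D G Δ) (S : Set D) (c : V → G) (hSinv) (hc) (v : V) :
    (normalize Θ S c hSinv hc).ωv v = conjSub (c v) (Θ.ωv v) := rfl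

lemma normalize_ωd (Θ : GenVoltage V D G Δ) (S : Set D) (c : V → G) (hSinv) (hc) (x : D) :
    (normalize Θ S c hSinv hc).ωd x = conjSub (c (Δ.beg x)) (Θ.ωd x) := rfl

section Iso

variable (Θ : GenVoltage V D G Δ) (S : Set D) (c : V → G)
  (hSinv : ∀ x ∈ S, Δ.inv x ∈ S)
  (hc : ∀ x ∈ S, Θ.ζ x * (c (Δ.beg x))⁻¹ * c (Δ.beg (Δ.inv x)) ∈ Θ.ωd (Δ.inv x))

/-- Coset-map equality helper on cover vertices. -/
lemma vmk_eq (Θ₀ : GenVoltage V D G Δ) {v : V} {a b : G} (h : b * a⁻¹ ∈ Θ₀.ωv v) :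
    (⟨v, Quotient.mk _ a⟩ : Θ₀.CovV) = ⟨v, Quotient.mk _ b⟩ :=
  congrArg (fun q => Sigma.mk v q) (Quotient.sound (QuotientGroup.rightRel_apply.mpr h))

/-- Coset-map equality helper on cover darts. -/
lemma dmk_eq (Θ₀ : GenVoltage V D G Δ) {x : D} {a b : G} (h : b * a⁻¹ ∈ Θ₀.ωd x) :
    (⟨x, Quotient.mk _ a⟩ : Θ₀.CovD) = ⟨x, Quotient.mk _ b⟩ :=
  congrArg (fun q => Sigma.mk x q) (Quotient.sound (QuotientGroup.rightRel_apply.mpr h))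

noncomputable def ΦV : Θ.CovV → (normalize Θ S c hSinv hc).CovV :=
  fun p => ⟨p.1, Quotient.map (fun g => c p.1 * g) (fun a b hab => by
    have h1 : b * a⁻¹ ∈ Θ.ωv p.1 := QuotientGroup.rightRel_apply.mp hab
    refine QuotientGroup.rightRel_apply.mpr ?_
    rw [normalize_ωv, mem_conjSub]
    have heq : (c p.1)⁻¹ * ((c p.1 * b) * (c p.1 * a)⁻¹) * c p.1 = b * a⁻¹ := by group
    rw [heq]; exact h1) p.2⟩

noncomputable def ΨV : (normalize Θ S c hSinv hc).CovV → Θ.CovV :=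
  fun p => ⟨p.1, Quotient.map (fun g => (c p.1)⁻¹ * g) (fun a b hab => by
    have h1 : b * a⁻¹ ∈ conjSub (c p.1) (Θ.ωv p.1) := QuotientGroup.rightRel_apply.mp hab
    rw [mem_conjSub] at h1
    refine QuotientGroup.rightRel_apply.mpr ?_
    have heq : ((c p.1)⁻¹ * b) * ((c p.1)⁻¹ * a)⁻¹ = (c p.1)⁻¹ * (b * a⁻¹) * c p.1 := by group
    rw [heq]; exact h1) p.2⟩

noncomputable def ΦD : Θ.CovD → (normalize Θ S c hSinv hc).CovD :=
  fun p => ⟨p.1, Quotient.map (fun g => c (Δ.beg p.1) * g) (fun a b hab => by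
    have h1 : b * a⁻¹ ∈ Θ.ωd p.1 := QuotientGroup.rightRel_apply.mp hab
    refine QuotientGroup.rightRel_apply.mpr ?_
    rw [normalize_ωd, mem_conjSub]
    have heq : (c (Δ.beg p.1))⁻¹ * ((c (Δ.beg p.1) * b) * (c (Δ.beg p.1) * a)⁻¹) * c (Δ.beg p.1)
        = b * a⁻¹ := by group
    rw [heq]; exact h1) p.2⟩

noncomputable def ΨD : (normalize Θ S c hSinv hc).CovD → Θ.CovD :=
  fun p => ⟨p.1, Quotient.map (fun g => (c (Δ.beg p.1))⁻¹ * g) (fun a b hab => by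
    have h1 : b * a⁻¹ ∈ conjSub (c (Δ.beg p.1)) (Θ.ωd p.1) := QuotientGroup.rightRel_apply.mp hab
    rw [mem_conjSub] at h1
    refine QuotientGroup.rightRel_apply.mpr ?_
    have heq : ((c (Δ.beg p.1))⁻¹ * b) * ((c (Δ.beg p.1))⁻¹ * a)⁻¹
        = (c (Δ.beg p.1))⁻¹ * (b * a⁻¹) * c (Δ.beg p.1) := by group
    rw [heq]; exact h1) p.2⟩

lemma ΦV_bij : Function.Bijective (ΦV Θ S c hSinv hc) := by
  refine Function.bijective_iff_has_inverse.mpr ⟨ΨV Θ S c hSinv hc, ?_, ?_⟩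
  · rintro ⟨v, q⟩
    refine Quotient.inductionOn q (fun g => ?_)
    show (⟨v, Quotient.mk _ ((c v)⁻¹ * (c v * g))⟩ : Θ.CovV) = ⟨v, Quotient.mk _ g⟩
    rw [inv_mul_cancel_left]
  · rintro ⟨v, q⟩
    refine Quotient.inductionOn q (fun g => ?_)
    show (⟨v, Quotient.mk _ (c v * ((c v)⁻¹ * g))⟩ : (normalize Θ S c hSinv hc).CovV)
        = ⟨v, Quotient.mk _ g⟩
    rw [mul_inv_cancel_left]

lemma ΦD_bij : Function.Bijective (ΦD Θ S c hSinv hc) := by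
  refine Function.bijective_iff_has_inverse.mpr ⟨ΨD Θ S c hSinv hc, ?_, ?_⟩
  · rintro ⟨x, q⟩
    refine Quotient.inductionOn q (fun g => ?_)
    show (⟨x, Quotient.mk _ ((c (Δ.beg x))⁻¹ * (c (Δ.beg x) * g))⟩ : Θ.CovD)
        = ⟨x, Quotient.mk _ g⟩
    rw [inv_mul_cancel_left]
  · rintro ⟨x, q⟩
    refine Quotient.inductionOn q (fun g => ?_)
    show (⟨x, Quotient.mk _ (c (Δ.beg x) * ((c (Δ.beg x))⁻¹ * g))⟩ :
        (normalize Θ S c hSinv hc).CovD) = ⟨x, Quotient.mk _ g⟩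
    rw [mul_inv_cancel_left]

lemma beg_comm : ∀ p, ΦV Θ S c hSinv hc (Θ.covBeg p)
    = (normalize Θ S c hSinv hc).covBeg (ΦD Θ S c hSinv hc p) := by
  rintro ⟨x, q⟩
  refine Quotient.inductionOn q (fun g => ?_)
  rfl

lemma inv_comm : ∀ p, ΦD Θ S c hSinv hc (Θ.covInv p)
    = (normalize Θ S c hSinv hc).covInv (ΦD Θ S c hSinv hc p) := by
  rintro ⟨x, q⟩
  refine Quotient.inductionOn q (fun g => ?_)
  show (⟨Δ.inv x, Quotient.mk _ (c (Δ.beg (Δ.inv x)) * (Θ.ζ x * g))⟩ :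
      (normalize Θ S c hSinv hc).CovD)
    = ⟨Δ.inv x, Quotient.mk _ ((normalize Θ S c hSinv hc).ζ x * (c (Δ.beg x) * g))⟩
  refine dmk_eq _ ?_
  rw [normalize_ωd, mem_conjSub, normalize_ζ]
  by_cases hxS : x ∈ S
  · rw [if_pos hxS]
    have he := (Θ.ωd (Δ.inv x)).inv_mem (hc x hxS)
    have heq : (c (Δ.beg (Δ.inv x)))⁻¹ *
        (1 * (c (Δ.beg x) * g) * (c (Δ.beg (Δ.inv x)) * (Θ.ζ x * g))⁻¹) * c (Δ.beg (Δ.inv x))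
        = (Θ.ζ x * (c (Δ.beg x))⁻¹ * c (Δ.beg (Δ.inv x)))⁻¹ := by group
    rw [heq]; exact he
  · rw [if_neg hxS]
    have heq : (c (Δ.beg (Δ.inv x)))⁻¹ *
        (c (Δ.beg (Δ.inv x)) * Θ.ζ x * (c (Δ.beg x))⁻¹ * (c (Δ.beg x) * g) *
          (c (Δ.beg (Δ.inv x)) * (Θ.ζ x * g))⁻¹) * c (Δ.beg (Δ.inv x)) = 1 := by group
    rw [heq]; exact (Θ.ωd (Δ.inv x)).one_mem

end Iso

end Stmt11Aux
/-- Voltages can be normalised to be trivial on a prescribed spanning tree,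
without changing the isomorphism class of the generalised cover. -/
theorem stmt_11 {V D G : Type*} [Group G] {Δ : PreGraph V D}
    (Θ : GenVoltage V D G Δ) (S : Set D) (hS : IsSpanningTree Δ S) :
    ∃ Θ' : GenVoltage V D G Δ,
      (∀ x ∈ S, Θ'.ζ x = 1) ∧
      ∃ (Φv : Θ.CovV → Θ'.CovV) (Φd : Θ.CovD → Θ'.CovD),
        Function.Bijective Φv ∧ Function.Bijective Φd ∧
        (∀ p, Φv (Θ.covBeg p) = Θ'.covBeg (Φd p)) ∧
        (∀ p, Φd (Θ.covInv p) = Θ'.covInv (Φd p)) := by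
  classical
  by_cases hV : Nonempty V
  · obtain ⟨v₀⟩ := hV
    have hwalks : ∀ v, ∃ r, Stmt11Aux.Walk Δ v₀ v r ∧ Stmt11Aux.Red Δ r ∧ ∀ x ∈ r, x ∈ S := by
      intro v
      obtain ⟨l, hl, hls⟩ := hS.2.1 v₀ v
      obtain ⟨r, hr, hred, hsub⟩ := Stmt11Aux.reduce_exists hl
      exact ⟨r, hr, hred, fun x hx => hls x (hsub x hx)⟩
    choose L hLw hLr hLs using hwalks
    set c : V → G := fun v => (Stmt11Aux.vol Θ.ζ (L v))⁻¹ with hc_def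
    have key : ∀ x ∈ S, Θ.ζ x * (c (Δ.beg x))⁻¹ * c (Δ.beg (Δ.inv x)) ∈ Θ.ωd (Δ.inv x) := by
      intro x hx
      have hterm : Δ.term x = Δ.beg (Δ.inv x) := rfl
      by_cases hred : Stmt11Aux.Red Δ (L (Δ.beg x) ++ [x])
      · -- the chosen walk to `term x` is the one to `beg x` extended by `x`
        have h1 : Stmt11Aux.Walk Δ v₀ (Δ.term x) (L (Δ.beg x) ++ [x]) :=
          Stmt11Aux.walk_append (hLw (Δ.beg x)) (Stmt11Aux.walk_single x)
        have heq := Stmt11Aux.reduced_unique hS (L (Δ.beg x) ++ [x]) (L (Δ.term x)) v₀ (Δ.term x)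
          h1 (hLw _) hred (hLr _) (by
            intro z hz
            rcases List.mem_append.mp hz with hz | hz
            · exact hLs _ z hz
            · simp only [List.mem_singleton] at hz; subst hz; exact hx) (hLs _)
        have hv : Stmt11Aux.vol Θ.ζ (L (Δ.term x)) = Θ.ζ x * Stmt11Aux.vol Θ.ζ (L (Δ.beg x)) := by
          rw [← heq, Stmt11Aux.vol_append]
          simp [Stmt11Aux.vol]
        rw [hterm] at hv
        have hone : Θ.ζ x * (c (Δ.beg x))⁻¹ * c (Δ.beg (Δ.inv x)) = 1 := by
          rw [hc_def]
          simp only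
          rw [hv]
          group
        rw [hone]
        exact (Θ.ωd (Δ.inv x)).one_mem
      · -- the chosen walk to `beg x` ends with `inv x`
        have hA : Stmt11Aux.Red Δ (L (Δ.beg x)) := hLr _
        have hj : ¬ ∀ p ∈ (L (Δ.beg x)).getLast?, ∀ q ∈ ([x] : List D).head?, q ≠ Δ.inv p := by
          intro hj
          exact hred (List.isChain_append.mpr ⟨hA, List.isChain_singleton x, hj⟩)
        push_neg at hj
        obtain ⟨p, hp, q, hq, hpq⟩ := hj
        rw [List.head?_cons, Option.mem_def, Option.some.injEq] at hq
        subst hq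
        have hpx : p = Δ.inv x := by rw [hpq, Δ.inv_inv]
        subst hpx
        have hane : L (Δ.beg x) ≠ [] := by
          rintro hnil
          rw [hnil] at hp
          simp at hp
        have hsplit : (L (Δ.beg x)).dropLast ++ [Δ.inv x] = L (Δ.beg x) := by
          have hgl : (L (Δ.beg x)).getLast hane = Δ.inv x := by
            have h0 := List.getLast?_eq_getLast hane
            rw [Option.mem_def, h0, Option.some.injEq] at hp
            exact hp
          rw [← hgl]
          exact List.dropLast_append_getLast hane
        obtain ⟨w, hw1, hw2⟩ := Stmt11Aux.walk_append_split (hsplit ▸ hLw (Δ.beg x))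
        obtain ⟨hwb, -⟩ := Stmt11Aux.walk_cons_iff hw2
        subst hwb
        have hdred : Stmt11Aux.Red Δ (L (Δ.beg x)).dropLast := by
          have := hsplit ▸ hA
          exact (List.isChain_append.mp this).1
        have hdS : ∀ z ∈ (L (Δ.beg x)).dropLast, z ∈ S := fun z hz =>
          hLs _ z ((List.dropLast_sublist (L (Δ.beg x))).subset hz)
        have heq := Stmt11Aux.reduced_unique hS ((L (Δ.beg x)).dropLast) (L (Δ.beg (Δ.inv x)))
          v₀ (Δ.beg (Δ.inv x)) hw1 (hLw _) hdred (hLr _) hdS (hLs _)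
        have hv : Stmt11Aux.vol Θ.ζ (L (Δ.beg x)) =
            Θ.ζ (Δ.inv x) * Stmt11Aux.vol Θ.ζ (L (Δ.beg (Δ.inv x))) := by
          rw [← hsplit, Stmt11Aux.vol_append, heq]
          simp [Stmt11Aux.vol]
        have hval : Θ.ζ x * (c (Δ.beg x))⁻¹ * c (Δ.beg (Δ.inv x)) = Θ.ζ x * Θ.ζ (Δ.inv x) := by
          rw [hc_def]
          simp only
          rw [hv]
          group
        rw [hval]
        have hcyc := Θ.wcyc (Δ.inv x)
        rw [Δ.inv_inv] at hcyc
        exact hcyc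
    refine ⟨Stmt11Aux.normalize Θ S c hS.1 key, ?_, Stmt11Aux.ΦV Θ S c hS.1 key,
      Stmt11Aux.ΦD Θ S c hS.1 key, Stmt11Aux.ΦV_bij Θ S c hS.1 key,
      Stmt11Aux.ΦD_bij Θ S c hS.1 key, Stmt11Aux.beg_comm Θ S c hS.1 key,
      Stmt11Aux.inv_comm Θ S c hS.1 key⟩
    intro x hx
    rw [Stmt11Aux.normalize_ζ, if_pos hx]
  · exact ⟨Θ, fun x _ => absurd ⟨Δ.beg x⟩ hV, id, id, Function.bijective_id,
      Function.bijective_id, fun p => rfl, fun p => rfl⟩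
end

section
/- In the generalised cover Γ = GenCov(Δ,G,ω,ζ), the set of neighbours of a vertex (u, ω(u)g) is exactly {(term x, ω(term x)·z·g) : x a dart of Δ with beg x = u, z ∈ ζ(x)ω(u)}. -/
open scoped Pointwise in
/-- The neighbours of a vertex `(u, ω(u)g)` of the generalised cover. -/
theorem stmt_12 {V D G : Type*} [Group G] {Δ : PreGraph V D}
    (Θ : GenVoltage V D G Δ) (u : V) (g : G) :
    {q : Θ.CovV | ∃ d : Θ.CovD, Θ.covBeg d = Θ.vmk u g ∧ Θ.covTerm d = q} =
    {q : Θ.CovV | ∃ (x : D) (z : G), Δ.beg x = u ∧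
        z ∈ (Θ.ζ x) • (Θ.ωv u : Set G) ∧ q = Θ.vmk (Δ.term x) (z * g)} := by
  ext q
  simp only [Set.mem_setOf_eq]
  constructor
  · rintro ⟨⟨x, hq⟩, hbeg, rfl⟩
    induction hq using Quotient.inductionOn with
    | h h =>
      have hx : Δ.beg x = u := congrArg Sigma.fst hbeg
      subst hx
      have h2 : (Quotient.mk _ h : Quotient (QuotientGroup.rightRel (Θ.ωv (Δ.beg x))))
          = Quotient.mk _ g := eq_of_heq (Sigma.mk.inj_iff.mp hbeg).2
      have hmem : g * h⁻¹ ∈ Θ.ωv (Δ.beg x) :=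
        QuotientGroup.rightRel_apply.mp (Quotient.exact h2)
      refine ⟨x, Θ.ζ x * (h * g⁻¹), rfl, ?_, ?_⟩
      · exact ⟨h * g⁻¹, by simpa using (Θ.ωv (Δ.beg x)).inv_mem hmem, rfl⟩
      · show Θ.vmk (Δ.beg (Δ.inv x)) (Θ.ζ x * h) = _
        congr 1
        group
  · rintro ⟨x, z, rfl, hz, rfl⟩
    obtain ⟨w, hw, rfl⟩ := hz
    refine ⟨⟨x, Quotient.mk _ (w * g)⟩, ?_, ?_⟩
    · show (⟨Δ.beg x, Quotient.mk _ (w * g)⟩ : Θ.CovV) = _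
      unfold GenVoltage.vmk
      congr 1
      exact Quotient.sound (QuotientGroup.rightRel_apply.mpr (by
        simpa using (Θ.ωv (Δ.beg x)).inv_mem hw))
    · show Θ.vmk (Δ.beg (Δ.inv x)) (Θ.ζ x * (w * g)) = _
      congr 1
      simp [smul_eq_mul, mul_assoc]
end

section
/- Let (Δ,G,ω,ζ) be a generalised voltage graph with Δ connected, T-normalised for a spanning tree T. Let A = ⟨ζ(x) : x ∈ D(Δ)\D(T)⟩ and B = ⟨ω(v) : v ∈ V(Δ)⟩. Then the generalised cover GenCov(Δ,G,ω,ζ) is connected if and only if G = ⟨A, B⟩. -/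
section Aux

/-- Concatenation of abstract walks. -/
theorem WalkBT.append {Vt Dt : Type*} {B T : Dt → Vt} {u v w : Vt} {l1 l2 : List Dt}
    (h1 : WalkBT B T u v l1) (h2 : WalkBT B T v w l2) : WalkBT B T u w (l1 ++ l2) := by
  induction h1 with
  | nil => simpa using h2
  | cons x _ ih => exact WalkBT.cons x (ih h2)

/-- Mapping of abstract walks along a morphism. -/
theorem WalkBT.mapBT {Vt Dt Vt' Dt' : Type*} {B T : Dt → Vt} {B' T' : Dt' → Vt'}
    (fV : Vt → Vt') (fD : Dt → Dt') (hB : ∀ x, B' (fD x) = fV (B x))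
    (hT : ∀ x, T' (fD x) = fV (T x)) {u v : Vt} {l : List Dt}
    (h : WalkBT B T u v l) : WalkBT B' T' (fV u) (fV v) (l.map fD) := by
  induction h with
  | nil v => exact WalkBT.nil _
  | cons x _ ih =>
    have := WalkBT.cons (B := B') (T := T') (fD x) (by rw [hT]; exact ih)
    rwa [hB] at this

/-- Reversal of abstract walks, given a reversal operation on darts. -/
theorem WalkBT.reverseBT {Vt Dt : Type*} {B T : Dt → Vt} (I : Dt → Dt)
    (hB : ∀ x, B (I x) = T x) (hT : ∀ x, T (I x) = B x) {u v : Vt} {l : List Dt}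
    (h : WalkBT B T u v l) : ∃ l' : List Dt, WalkBT B T v u l' := by
  induction h with
  | nil v => exact ⟨[], WalkBT.nil v⟩
  | cons x _ ih =>
    obtain ⟨l', hl'⟩ := ih
    refine ⟨l' ++ [I x], hl'.append ?_⟩
    have : WalkBT B T (B (I x)) (T (I x)) [I x] := WalkBT.cons (I x) (WalkBT.nil _)
    rwa [hB, hT] at this

namespace GenVoltage

variable {V D G : Type*} [Group G] {Δ : PreGraph V D} (Θ : GenVoltage V D G Δ)

theorem covBeg_dmk (x : D) (g : G) : Θ.covBeg (Θ.dmk x g) = Θ.vmk (Δ.beg x) g := rfl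

theorem covTerm_dmk (x : D) (g : G) :
    Θ.covTerm (Θ.dmk x g) = Θ.vmk (Δ.term x) (Θ.ζ x * g) := rfl

theorem vmk_eq {v : V} {a b : G} (h : b * a⁻¹ ∈ Θ.ωv v) : Θ.vmk v a = Θ.vmk v b :=
  congrArg (fun q => (⟨v, q⟩ : Θ.CovV))
    (Quotient.sound (QuotientGroup.rightRel_apply.mpr h))

/-- Reachability in the generalised cover. -/
def Reach (p q : Θ.CovV) : Prop := ∃ L : List Θ.CovD, WalkBT Θ.covBeg Θ.covTerm p q L

theorem Reach.refl (p : Θ.CovV) : Θ.Reach p p := ⟨[], WalkBT.nil p⟩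

theorem Reach.trans {p q r : Θ.CovV} (h1 : Θ.Reach p q) (h2 : Θ.Reach q r) : Θ.Reach p r := by
  obtain ⟨L1, h1⟩ := h1; obtain ⟨L2, h2⟩ := h2; exact ⟨L1 ++ L2, h1.append h2⟩

theorem covTerm_covInv (p : Θ.CovD) : Θ.covTerm (Θ.covInv p) = Θ.covBeg p := by
  obtain ⟨x, g⟩ := p
  induction g using Quotient.inductionOn with
  | h g =>
    show Θ.vmk (Δ.beg (Δ.inv (Δ.inv x))) (Θ.ζ (Δ.inv x) * (Θ.ζ x * g)) = Θ.vmk (Δ.beg x) g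
    rw [Δ.inv_inv]
    exact (Θ.vmk_eq (by simpa [mul_assoc] using Θ.wle x (Θ.wcyc x))).symm

theorem Reach.symm {p q : Θ.CovV} (h : Θ.Reach p q) : Θ.Reach q p := by
  obtain ⟨L, hL⟩ := h
  exact hL.reverseBT Θ.covInv (fun x => rfl) (fun x => Θ.covTerm_covInv x)

theorem covBeg_covRightD (h : G) (p : Θ.CovD) :
    Θ.covBeg (Θ.covRightD h p) = Θ.covRightV h (Θ.covBeg p) := by
  obtain ⟨x, g⟩ := p
  induction g using Quotient.inductionOn with
  | h g => rfl

theorem covTerm_covRightD (h : G) (p : Θ.CovD) :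
    Θ.covTerm (Θ.covRightD h p) = Θ.covRightV h (Θ.covTerm p) := by
  obtain ⟨x, g⟩ := p
  induction g using Quotient.inductionOn with
  | h g =>
    show Θ.vmk (Δ.beg (Δ.inv x)) (Θ.ζ x * (g * h)) = Θ.vmk (Δ.beg (Δ.inv x)) (Θ.ζ x * g * h)
    rw [mul_assoc]

theorem Reach.right (h : G) {p q : Θ.CovV} (hr : Θ.Reach p q) :
    Θ.Reach (Θ.covRightV h p) (Θ.covRightV h q) := by
  obtain ⟨L, hL⟩ := hr
  exact ⟨L.map (Θ.covRightD h),
    hL.mapBT (Θ.covRightV h) (Θ.covRightD h) (Θ.covBeg_covRightD h) (Θ.covTerm_covRightD h)⟩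

theorem covRightV_vmk (h : G) (v : V) (g : G) :
    Θ.covRightV h (Θ.vmk v g) = Θ.vmk v (g * h) := rfl

/-- Lifting a walk with trivial voltages. -/
theorem lift_trivial (g : G) {u v : V} {l : List D} (hw : WalkBT Δ.beg Δ.term u v l)
    (hl : ∀ x ∈ l, Θ.ζ x = 1) : Θ.Reach (Θ.vmk u g) (Θ.vmk v g) := by
  induction hw with
  | nil v => exact Reach.refl Θ _
  | cons x w ih =>
    obtain ⟨L, hL⟩ := ih (fun y hy => hl y (List.mem_cons_of_mem _ hy))
    have hterm : Θ.covTerm (Θ.dmk x g) = Θ.vmk (Δ.term x) g := by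
      rw [Θ.covTerm_dmk, hl x (List.mem_cons_self (a := x)), one_mul]
    rw [← hterm] at hL
    exact ⟨Θ.dmk x g :: L, WalkBT.cons (Θ.dmk x g) hL⟩

end GenVoltage

end Aux

/-- Connectivity criterion: the generalised cover of a `T`-normalised voltage
graph is connected iff `G = ⟨A, B⟩`. -/
theorem stmt_15 {V D G : Type*} [Group G] [Nonempty V] {Δ : PreGraph V D}
    (Θ : GenVoltage V D G Δ) (S : Set D) (hS : IsSpanningTree Δ S)
    (hnorm : ∀ x ∈ S, Θ.ζ x = 1) :
    (∀ p q : Θ.CovV, ∃ L : List Θ.CovD, WalkBT Θ.covBeg Θ.covTerm p q L) ↔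
      Subgroup.closure
        ({g : G | ∃ x : D, x ∉ S ∧ g = Θ.ζ x} ∪ {g : G | ∃ v : V, g ∈ Θ.ωv v}) = ⊤ := by
  classical
  set Gen : Set G :=
    ({g : G | ∃ x : D, x ∉ S ∧ g = Θ.ζ x} ∪ {g : G | ∃ v : V, g ∈ Θ.ωv v}) with hGen
  set H : Subgroup G := Subgroup.closure Gen with hH
  obtain ⟨v₀⟩ := (inferInstance : Nonempty V)
  obtain ⟨hSinv, hSspan, hScyc⟩ := hS
  have hωH : ∀ (v : V) (g : G), g ∈ Θ.ωv v → g ∈ H := fun v g hg =>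
    Subgroup.subset_closure (Or.inr ⟨v, hg⟩)
  have hζH : ∀ x : D, Θ.ζ x ∈ H := by
    intro x
    by_cases hx : x ∈ S
    · rw [hnorm x hx]; exact one_mem H
    · exact Subgroup.subset_closure (Or.inl ⟨x, hx, rfl⟩)
  have treeReach : ∀ (g : G) (u v : V), Θ.Reach (Θ.vmk u g) (Θ.vmk v g) := by
    intro g u v
    obtain ⟨l, hw, hl⟩ := hSspan u v
    exact Θ.lift_trivial g hw (fun x hx => hnorm x (hl x hx))
  constructor
  · intro hconn
    rw [Subgroup.eq_top_iff']
    intro g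
    have key : ∀ {p q : Θ.CovV} {L : List Θ.CovD}, WalkBT Θ.covBeg Θ.covTerm p q L →
        (∀ a : G, p.2 = Quotient.mk _ a → a ∈ H) →
        (∀ b : G, q.2 = Quotient.mk _ b → b ∈ H) := by
      intro p q L hw
      induction hw with
      | nil v => exact id
      | cons X w ih =>
        intro hp
        apply ih
        obtain ⟨x, c⟩ := X
        induction c using Quotient.inductionOn with
        | h c =>
          intro b hb
          have hc : c ∈ H := hp c rfl
          have hb2 : (Quotient.mk _ (Θ.ζ x * c) :
              Quotient (QuotientGroup.rightRel (Θ.ωv (Δ.term x)))) = Quotient.mk _ b := hb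
          have hmem : b * (Θ.ζ x * c)⁻¹ ∈ Θ.ωv (Δ.term x) :=
            QuotientGroup.rightRel_apply.mp (Quotient.exact hb2)
          have : b = (b * (Θ.ζ x * c)⁻¹) * Θ.ζ x * c := by group
          rw [this]
          exact mul_mem (mul_mem (hωH _ _ hmem) (hζH x)) hc
    obtain ⟨L, hL⟩ := hconn (Θ.vmk v₀ 1) (Θ.vmk v₀ g)
    refine key hL ?_ g rfl
    intro a ha
    have ha2 : (Quotient.mk _ (1 : G) :
        Quotient (QuotientGroup.rightRel (Θ.ωv v₀))) = Quotient.mk _ a := ha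
    have : a * 1⁻¹ ∈ Θ.ωv v₀ := QuotientGroup.rightRel_apply.mp (Quotient.exact ha2)
    simpa using hωH v₀ _ this
  · intro htop p q
    have K : ∀ g : G, Θ.Reach (Θ.vmk v₀ 1) (Θ.vmk v₀ g) := by
      intro g
      have hg : g ∈ H := htop ▸ Subgroup.mem_top g
      induction hg using Subgroup.closure_induction with
      | mem x hx =>
        rcases hx with ⟨y, hy, rfl⟩ | ⟨v, hv⟩
        · have hd : Θ.Reach (Θ.vmk (Δ.beg y) 1) (Θ.covTerm (Θ.dmk y 1)) :=
            ⟨[Θ.dmk y 1], WalkBT.cons (Θ.dmk y 1) (WalkBT.nil _)⟩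
          have hterm : Θ.covTerm (Θ.dmk y 1) = Θ.vmk (Δ.term y) (Θ.ζ y) := by
            rw [Θ.covTerm_dmk, mul_one]
          rw [hterm] at hd
          exact GenVoltage.Reach.trans Θ (treeReach 1 v₀ (Δ.beg y))
            (GenVoltage.Reach.trans Θ hd (treeReach (Θ.ζ y) (Δ.term y) v₀))
        · have h1 : Θ.vmk v 1 = Θ.vmk v x := Θ.vmk_eq (by simpa using hv)
          have h2 : Θ.Reach (Θ.vmk v x) (Θ.vmk v₀ x) := treeReach x v v₀
          rw [← h1] at h2
          exact GenVoltage.Reach.trans Θ (treeReach 1 v₀ v) h2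
      | one => exact GenVoltage.Reach.refl Θ _
      | mul a b _ _ ha hb =>
        have h3 := GenVoltage.Reach.right Θ b ha
        rw [Θ.covRightV_vmk, Θ.covRightV_vmk, one_mul] at h3
        exact GenVoltage.Reach.trans Θ hb h3
      | inv a _ ha =>
        have h3 := GenVoltage.Reach.right Θ a⁻¹ ha
        rw [Θ.covRightV_vmk, Θ.covRightV_vmk, one_mul, mul_inv_cancel] at h3
        exact GenVoltage.Reach.symm Θ h3
    obtain ⟨u, qa⟩ := p
    obtain ⟨w, qb⟩ := q
    induction qa using Quotient.inductionOn with
    | h a =>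
      induction qb using Quotient.inductionOn with
      | h b =>
        show Θ.Reach (Θ.vmk u a) (Θ.vmk w b)
        have h1 : Θ.Reach (Θ.vmk u a) (Θ.vmk v₀ a) := treeReach a u v₀
        have h2 := GenVoltage.Reach.right Θ a (K (b * a⁻¹))
        rw [Θ.covRightV_vmk, Θ.covRightV_vmk, one_mul, inv_mul_cancel_right] at h2
        exact GenVoltage.Reach.trans Θ h1 (GenVoltage.Reach.trans Θ h2 (treeReach b v₀ w))
end

section
/- Let Γ = GenCov(Δ,G,ω,ζ). Then Γ has a semi-edge (a self-inverse dart) if and only if there is a dart x of Δ with x = x⁻¹ and ζ(x) ∈ ω(x). -/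
/-- The generalised cover has a semi-edge iff some dart `x` of `Δ` satisfies
`x = x⁻¹` and `ζ(x) ∈ ω(x)`. -/
theorem stmt_17 {V D G : Type*} [Group G] {Δ : PreGraph V D}
    (Θ : GenVoltage V D G Δ) :
    (∃ p : Θ.CovD, Θ.covInv p = p) ↔ ∃ x : D, Δ.inv x = x ∧ Θ.ζ x ∈ Θ.ωd x := by
  constructor
  · rintro ⟨⟨x, q⟩, hp⟩
    obtain ⟨g, rfl⟩ := q.exists_rep
    have h1 : Δ.inv x = x := congrArg Sigma.fst hp
    refine ⟨x, h1, ?_⟩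
    have h2 : (⟨Δ.inv x, Quotient.mk _ (Θ.ζ x * g)⟩ : Θ.CovD) = ⟨x, Quotient.mk _ g⟩ := hp
    rw [h1] at h2
    have h3 : (Quotient.mk _ (Θ.ζ x * g) : Quotient (QuotientGroup.rightRel (Θ.ωd x))) = Quotient.mk _ g := by
      simpa using h2
    have h4 := QuotientGroup.rightRel_apply.mp (Quotient.exact h3)
    simpa [mul_inv_rev, mul_assoc] using (Θ.ωd x).inv_mem h4
  · rintro ⟨x, hx, hz⟩
    refine ⟨⟨x, Quotient.mk _ 1⟩, ?_⟩
    show (⟨Δ.inv x, Quotient.mk _ (Θ.ζ x * 1)⟩ : Θ.CovD) = ⟨x, Quotient.mk _ 1⟩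
    rw [hx]
    congr 1
    exact Quotient.sound (QuotientGroup.rightRel_apply.mpr (by simpa using (Θ.ωd x).inv_mem hz))
end

section
/- Let Γ be a graph and G ≤ Aut(Γ). Then there exist a weight function ω: V(Γ/G) ∪ D(Γ/G) → (subgroups of G) and a voltage assignment ζ: D(Γ/G) → G such that (Γ/G, G, ω, ζ) is a generalised voltage graph and Γ is isomorphic to GenCov(Γ/G, G, ω, ζ); moreover ω can be taken as ω(x^G) = G_x (the stabiliser) for a transversal x of each orbit, the isomorphism maps each G-orbit bijectively to a fibre, and the resulting generalised voltage graph is faithful. -/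
/-- Reconstruction: a graph with a group of automorphisms `G` is isomorphic to a
generalised cover over its quotient, with stabilisers as weights, orbits mapped
to fibres, and the resulting generalised voltage graph faithful. -/
theorem stmt_18 {V D G : Type*} [Group G] [MulAction G V] [MulAction G D]
    (Δ : PreGraph V D)
    (hbeg : ∀ (g : G) (x : D), Δ.beg (g • x) = g • Δ.beg x)
    (hinv : ∀ (g : G) (x : D), Δ.inv (g • x) = g • Δ.inv x)
    (hfaithful : ∀ g : G, (∀ x : D, g • x = x) → g = 1) :
    ∃ (Q : PreGraph (Quotient (MulAction.orbitRel G V))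
          (Quotient (MulAction.orbitRel G D)))
      (Θ : GenVoltage (Quotient (MulAction.orbitRel G V))
          (Quotient (MulAction.orbitRel G D)) G Q),
      (∀ x : D, Q.beg (Quotient.mk (MulAction.orbitRel G D) x) =
          Quotient.mk (MulAction.orbitRel G V) (Δ.beg x)) ∧
      (∀ x : D, Q.inv (Quotient.mk (MulAction.orbitRel G D) x) =
          Quotient.mk (MulAction.orbitRel G D) (Δ.inv x)) ∧
      (∃ (secV : Quotient (MulAction.orbitRel G V) → V)
         (secD : Quotient (MulAction.orbitRel G D) → D),
        (∀ q, Quotient.mk (MulAction.orbitRel G V) (secV q) = q) ∧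
        (∀ q, Quotient.mk (MulAction.orbitRel G D) (secD q) = q) ∧
        (∀ q, Θ.ωv q = MulAction.stabilizer G (secV q)) ∧
        (∀ q, Θ.ωd q = MulAction.stabilizer G (secD q))) ∧
      (∃ (Φv : V → Θ.CovV) (Φd : D → Θ.CovD),
        Function.Bijective Φv ∧ Function.Bijective Φd ∧
        (∀ x : D, Φv (Δ.beg x) = Θ.covBeg (Φd x)) ∧
        (∀ x : D, Φd (Δ.inv x) = Θ.covInv (Φd x)) ∧
        (∀ v : V, (Φv v).1 = Quotient.mk (MulAction.orbitRel G V) v) ∧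
        (∀ x : D, (Φd x).1 = Quotient.mk (MulAction.orbitRel G D) x)) ∧
      (⨅ q, Θ.ωd q).normalCore = ⊥ := by
  classical
  set sV := MulAction.orbitRel G V with hsV
  set sD := MulAction.orbitRel G D with hsD
  have relV : ∀ {a b : V}, (Quotient.mk sV a = Quotient.mk sV b) ↔ ∃ g : G, g • b = a := by
    intro a b
    rw [Quotient.eq]
    exact Iff.trans (MulAction.orbitRel_apply) MulAction.mem_orbit_iff
  have relD : ∀ {a b : D}, (Quotient.mk sD a = Quotient.mk sD b) ↔ ∃ g : G, g • b = a := by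
    intro a b
    rw [Quotient.eq]
    exact Iff.trans (MulAction.orbitRel_apply) MulAction.mem_orbit_iff
  -- quotient graph
  let Q : PreGraph (Quotient sV) (Quotient sD) :=
    { beg := Quotient.map Δ.beg (by
        intro a b hab
        obtain ⟨g, hg⟩ := MulAction.mem_orbit_iff.mp (MulAction.orbitRel_apply.mp hab)
        refine MulAction.orbitRel_apply.mpr (MulAction.mem_orbit_iff.mpr ⟨g, ?_⟩)
        rw [← hg, hbeg])
      inv := Quotient.map Δ.inv (by
        intro a b hab
        obtain ⟨g, hg⟩ := MulAction.mem_orbit_iff.mp (MulAction.orbitRel_apply.mp hab)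
        refine MulAction.orbitRel_apply.mpr (MulAction.mem_orbit_iff.mpr ⟨g, ?_⟩)
        rw [← hg, hinv])
      inv_inv := fun q => Quotient.inductionOn q (fun x => by
        show Quotient.mk sD (Δ.inv (Δ.inv x)) = Quotient.mk sD x
        rw [Δ.inv_inv]) }
  have Qbeg : ∀ x : D, Q.beg (Quotient.mk sD x) = Quotient.mk sV (Δ.beg x) := fun _ => rfl
  have Qinv : ∀ x : D, Q.inv (Quotient.mk sD x) = Quotient.mk sD (Δ.inv x) := fun _ => rfl
  -- sections
  let secV : Quotient sV → V := Quotient.out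
  have hsecV : ∀ q, Quotient.mk sV (secV q) = q := fun q => Quotient.out_eq q
  have hsecD0 : ∀ q : Quotient sD, ∃ d : D, Quotient.mk sD d = q ∧
      secV (Quotient.mk sV (Δ.beg d)) = Δ.beg d := by
    intro q
    obtain ⟨g, hg⟩ : ∃ g : G, g • Δ.beg q.out = secV (Quotient.mk sV (Δ.beg q.out)) :=
      relV.mp (hsecV (Quotient.mk sV (Δ.beg q.out)))
    refine ⟨g • q.out, ?_, ?_⟩
    · conv_rhs => rw [← Quotient.out_eq q]
      exact relD.mpr ⟨g, rfl⟩
    · have h1 : Δ.beg (g • q.out) = g • Δ.beg q.out := hbeg g q.out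
      have h2 : Quotient.mk sV (Δ.beg (g • q.out)) = Quotient.mk sV (Δ.beg q.out) := by
        rw [relV]; exact ⟨g, h1.symm⟩
      rw [h2, h1, hg]
  choose secD hsecD hsecDbeg using hsecD0
  -- voltages
  have hz0 : ∀ q : Quotient sD, ∃ g : G, g • Δ.inv (secD q) = secD (Q.inv q) := by
    intro q
    have h : Quotient.mk sD (secD (Q.inv q)) = Quotient.mk sD (Δ.inv (secD q)) := by
      rw [hsecD, ← Qinv (secD q), hsecD]
    exact relD.mp h
  choose zeta hzeta using hz0
  -- stabilizer facts
  have stab_inv : ∀ (d : D) (g : G), g ∈ MulAction.stabilizer G (Δ.inv d) ↔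
      g ∈ MulAction.stabilizer G d := by
    intro d g
    constructor
    · intro h
      have h1 : g • Δ.inv d = Δ.inv d := h
      have := congrArg Δ.inv h1
      rwa [← hinv, Δ.inv_inv, Δ.inv_inv] at this
    · intro h
      have h1 : g • d = d := h
      show g • Δ.inv d = Δ.inv d
      rw [← hinv, h1]
  have stab_smul : ∀ (d : D) (g h : G), h ∈ MulAction.stabilizer G (g • d) ↔
      g⁻¹ * h * g ∈ MulAction.stabilizer G d := by
    intro d g h
    constructor
    · intro hh
      have h1 : h • g • d = g • d := hh
      show (g⁻¹ * h * g) • d = d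
      rw [mul_smul, mul_smul, h1, inv_smul_smul]
    · intro hh
      have h1 : (g⁻¹ * h * g) • d = d := hh
      show h • g • d = g • d
      have := congrArg (fun y => g • y) h1
      simpa [mul_smul] using this
  -- the voltage graph
  let Θ : GenVoltage (Quotient sV) (Quotient sD) G Q :=
    { ωv := fun q => MulAction.stabilizer G (secV q)
      ωd := fun q => MulAction.stabilizer G (secD q)
      ζ := zeta
      wle := by
        intro q g hg
        have h1 : g • secD q = secD q := hg
        show g • secV (Q.beg q) = secV (Q.beg q)
        have hb : secV (Q.beg q) = Δ.beg (secD q) := by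
          conv_lhs => rw [← hsecD q]
          exact hsecDbeg q
        rw [hb, ← hbeg, h1]
      wconj := by
        intro q g
        show g ∈ MulAction.stabilizer G (secD q) ↔
          zeta q * g * (zeta q)⁻¹ ∈ MulAction.stabilizer G (secD (Q.inv q))
        rw [← hzeta q, stab_smul]
        have h2 : (zeta q)⁻¹ * (zeta q * g * (zeta q)⁻¹) * zeta q = g := by group
        rw [h2, stab_inv]
      wcyc := by
        intro q
        show (zeta (Q.inv q) * zeta q) • secD q = secD q
        have h1 : zeta q • Δ.inv (secD q) = secD (Q.inv q) := hzeta q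
        have h2 : zeta (Q.inv q) • Δ.inv (secD (Q.inv q)) = secD (Q.inv (Q.inv q)) := hzeta _
        rw [Q.inv_inv] at h2
        have h3 : zeta q • secD q = Δ.inv (secD (Q.inv q)) := by
          have := congrArg Δ.inv h1
          rwa [← hinv, Δ.inv_inv] at this
        rw [mul_smul, h3, h2] }
  -- lifting maps
  have hphiv0 : ∀ v : V, ∃ g : G, g • v = secV (Quotient.mk sV v) :=
    fun v => relV.mp (hsecV (Quotient.mk sV v))
  choose phiv hphiv using hphiv0
  have hphid0 : ∀ x : D, ∃ g : G, g • x = secD (Quotient.mk sD x) :=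
    fun x => relD.mp (hsecD (Quotient.mk sD x))
  choose phid hphid using hphid0
  let Φv : V → Θ.CovV := fun v => ⟨Quotient.mk sV v, Quotient.mk _ (phiv v)⟩
  let Φd : D → Θ.CovD := fun x => ⟨Quotient.mk sD x, Quotient.mk _ (phid x)⟩
  -- sigma equality helpers
  have sigV : ∀ (q1 q2 : Quotient sV) (u : V) (g1 g2 : G), q1 = q2 →
      g1 • u = secV q2 → g2 • u = secV q2 →
      (⟨q1, Quotient.mk _ g1⟩ : Θ.CovV) = ⟨q2, Quotient.mk _ g2⟩ := by
    intro q1 q2 u g1 g2 hq h1 h2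
    subst hq
    refine congrArg (fun c => (⟨q1, c⟩ : Θ.CovV)) (Quotient.sound ?_)
    refine QuotientGroup.rightRel_apply.mpr ?_
    show (g2 * g1⁻¹) • secV q1 = secV q1
    calc (g2 * g1⁻¹) • secV q1 = g2 • (g1⁻¹ • (g1 • u)) := by rw [mul_smul, h1]
      _ = secV q1 := by rw [inv_smul_smul, h2]
  have sigD : ∀ (q1 q2 : Quotient sD) (u : D) (g1 g2 : G), q1 = q2 →
      g1 • u = secD q2 → g2 • u = secD q2 →
      (⟨q1, Quotient.mk _ g1⟩ : Θ.CovD) = ⟨q2, Quotient.mk _ g2⟩ := by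
    intro q1 q2 u g1 g2 hq h1 h2
    subst hq
    refine congrArg (fun c => (⟨q1, c⟩ : Θ.CovD)) (Quotient.sound ?_)
    refine QuotientGroup.rightRel_apply.mpr ?_
    show (g2 * g1⁻¹) • secD q1 = secD q1
    calc (g2 * g1⁻¹) • secD q1 = g2 • (g1⁻¹ • (g1 • u)) := by rw [mul_smul, h1]
      _ = secD q1 := by rw [inv_smul_smul, h2]
  -- inverses
  let Ψv : Θ.CovV → V := fun p => Quotient.lift (fun g : G => g⁻¹ • secV p.1)
    (by
      intro a b hab
      have h1 : (b * a⁻¹) • secV p.1 = secV p.1 := QuotientGroup.rightRel_apply.mp hab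
      have := congrArg (fun y => b⁻¹ • y) h1
      simpa [mul_smul] using this) p.2
  let Ψd : Θ.CovD → D := fun p => Quotient.lift (fun g : G => g⁻¹ • secD p.1)
    (by
      intro a b hab
      have h1 : (b * a⁻¹) • secD p.1 = secD p.1 := QuotientGroup.rightRel_apply.mp hab
      have := congrArg (fun y => b⁻¹ • y) h1
      simpa [mul_smul] using this) p.2
  refine ⟨Q, Θ, Qbeg, Qinv, ⟨secV, secD, hsecV, hsecD, fun _ => rfl, fun _ => rfl⟩,
    ⟨Φv, Φd, ?_, ?_, ?_, ?_, fun _ => rfl, fun _ => rfl⟩, ?_⟩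
  · -- Φv bijective
    rw [Function.bijective_iff_has_inverse]
    refine ⟨Ψv, ?_, ?_⟩
    · intro v
      show (phiv v)⁻¹ • secV (Quotient.mk sV v) = v
      rw [← hphiv v, inv_smul_smul]
    · rintro ⟨q, c⟩
      induction c using Quotient.inductionOn with
      | h g =>
        have hq : Quotient.mk sV (g⁻¹ • secV q) = q := by
          conv_rhs => rw [← hsecV q]
          exact relV.mpr ⟨g⁻¹, rfl⟩
        have h1 : phiv (g⁻¹ • secV q) • (g⁻¹ • secV q) = secV q := by
          rw [hphiv, hq]
        have h2 : g • (g⁻¹ • secV q) = secV q := smul_inv_smul g _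
        exact sigV _ q (g⁻¹ • secV q) _ g hq h1 h2
  · -- Φd bijective
    rw [Function.bijective_iff_has_inverse]
    refine ⟨Ψd, ?_, ?_⟩
    · intro x
      show (phid x)⁻¹ • secD (Quotient.mk sD x) = x
      rw [← hphid x, inv_smul_smul]
    · rintro ⟨q, c⟩
      induction c using Quotient.inductionOn with
      | h g =>
        have hq : Quotient.mk sD (g⁻¹ • secD q) = q := by
          conv_rhs => rw [← hsecD q]
          exact relD.mpr ⟨g⁻¹, rfl⟩
        have h1 : phid (g⁻¹ • secD q) • (g⁻¹ • secD q) = secD q := by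
          rw [hphid, hq]
        have h2 : g • (g⁻¹ • secD q) = secD q := smul_inv_smul g _
        exact sigD _ q (g⁻¹ • secD q) _ g hq h1 h2
  · -- beg commutes
    intro x
    have h2 : phid x • Δ.beg x = secV (Quotient.mk sV (Δ.beg x)) := by
      have e1 : Quotient.mk sV (Δ.beg (secD (Quotient.mk sD x)))
          = Quotient.mk sV (Δ.beg x) := by
        rw [← Qbeg, ← Qbeg, hsecD]
      rw [← hbeg, hphid x, ← e1]
      exact (hsecDbeg (Quotient.mk sD x)).symm
    exact sigV _ _ (Δ.beg x) (phiv (Δ.beg x)) (phid x) rfl (hphiv (Δ.beg x)) h2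
  · -- inv commutes
    intro x
    have h1 : phid (Δ.inv x) • Δ.inv x = secD (Quotient.mk sD (Δ.inv x)) := hphid _
    have h2 : (zeta (Quotient.mk sD x) * phid x) • Δ.inv x
        = secD (Quotient.mk sD (Δ.inv x)) := by
      rw [mul_smul, ← hinv, hphid x]
      have := hzeta (Quotient.mk sD x)
      rwa [Qinv x] at this
    exact sigD _ _ (Δ.inv x) (phid (Δ.inv x)) (zeta (Quotient.mk sD x) * phid x) rfl h1 h2
  · -- faithfulness
    rw [eq_bot_iff]
    intro g hg
    have hg' : ∀ b : G, b * g * b⁻¹ ∈ ⨅ q, Θ.ωd q := hg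
    have hfix : ∀ x : D, g • x = x := by
      intro x
      have h1 : (phid x * g * (phid x)⁻¹) ∈ Θ.ωd (Quotient.mk sD x) :=
        Subgroup.mem_iInf.mp (hg' (phid x)) (Quotient.mk sD x)
      have h2 : (phid x * g * (phid x)⁻¹) • secD (Quotient.mk sD x)
          = secD (Quotient.mk sD x) := h1
      have h3 : x = (phid x)⁻¹ • secD (Quotient.mk sD x) := by
        rw [← hphid x, inv_smul_smul]
      calc g • x = ((phid x)⁻¹ * (phid x * g * (phid x)⁻¹) * phid x) • x := by group
        _ = (phid x)⁻¹ • (phid x * g * (phid x)⁻¹) • phid x • x := by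
              rw [mul_smul, mul_smul]
        _ = (phid x)⁻¹ • secD (Quotient.mk sD x) := by rw [hphid x, h2]
        _ = x := h3.symm
    rw [hfaithful g hfix]
    exact Subgroup.mem_bot.mpr rfl
end
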